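/- arXiv:2105.11719 — 7 statements merged into one kernel-verified Lean document; each statement's English description precedes it below -/
import Mathlib

section
/- Let N be an even integer with N ≥ 4 and 4 ∣ N. Then the least positive integer n such that the constant n-tuple (N/2 mod N, …, N/2 mod N) of elements of ℤ/Nℤ satisfies M_n(N/2, …, N/2) = Id or M_n(N/2, …, N/2) = −Id is n = 4; moreover the 4-tuple (N/2, N/2, N/2, N/2) is an irreducible solution of (E_N). -/
open Matrix

/-- `Mmat [a₁, …, aₙ]` is the product `[[aₙ,-1],[1,0]] ⋯ [[a₁,-1],[1,0]]`. -/
def Mmat {R : Type*} [CommRing R] : List R → Matrix (Fin 2) (Fin 2) R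
  | [] => 1
  | a :: t => Mmat t * !![a, -1; 1, 0]

/-- A tuple is a solution of (E_N) if its matrix is `Id` or `-Id`. -/
def IsSolution {R : Type*} [CommRing R] (l : List R) : Prop :=
  Mmat l = 1 ∨ Mmat l = -1

/-- The sum `(a₁,…,aₙ) ⊕ (b₁,…,bₘ) = (a₁+bₘ, a₂,…,aₙ₋₁, aₙ+b₁, b₂,…,bₘ₋₁)`. -/
def oplus {R : Type*} [CommRing R] (a b : List R) : List R :=
  List.ofFn (fun i : Fin (a.length + b.length - 2) =>
    if (i : ℕ) = 0 then a.getD 0 0 + b.getD (b.length - 1) 0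
    else if (i : ℕ) < a.length - 1 then a.getD (i : ℕ) 0
    else if (i : ℕ) = a.length - 1 then a.getD (a.length - 1) 0 + b.getD 0 0
    else b.getD ((i : ℕ) - a.length + 1) 0)

/-- Two tuples are equivalent if one is a cyclic permutation of the other or of
its reversal. -/
def TupleEquiv {R : Type*} (a b : List R) : Prop :=
  (∃ k, b = a.rotate k) ∨ (∃ k, b = a.reverse.rotate k)

/-- A solution `c` (of size ≥ 3) is reducible if `c ∼ a ⊕ b` with `b` a solution,
`a` of size ≥ 3 and `b` of size ≥ 3. -/
def Reducible {R : Type*} [CommRing R] (c : List R) : Prop :=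
  ∃ a b : List R, 3 ≤ a.length ∧ 3 ≤ b.length ∧ IsSolution b ∧
    TupleEquiv c (oplus a b)

/-- The alternating tuple `(k, -k, k, -k, …)` of length `n`. -/
def altList {R : Type*} [CommRing R] (n : ℕ) (k : R) : List R :=
  List.ofFn (fun i : Fin n => if (i : ℕ) % 2 = 0 then k else -k)

/-- Continuants: `K₋₁ = 0`, `K₀ = 1`,
`Kₙ(x₁,…,xₙ) = x₁·Kₙ₋₁(x₂,…,xₙ) - Kₙ₋₂(x₃,…,xₙ)`. -/
def contK {R : Type*} [CommRing R] : List R → R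
  | [] => 1
  | [x] => x
  | x :: y :: t => x * contK (y :: t) - contK t

lemma mmat_one' {R : Type*} [CommRing R] (x : R) : Mmat [x] = !![x, -1; 1, 0] := by
  simp [Mmat]

lemma mmat_two' {R : Type*} [CommRing R] (x y : R) :
    Mmat [x, y] = !![y*x - 1, -y; x, -1] := by
  ext i j
  fin_cases i <;> fin_cases j <;> simp [Mmat, Matrix.mul_fin_two] <;> ring_nf

lemma mmat_three' {R : Type*} [CommRing R] (x y z : R) :
    Mmat [x, y, z] = !![(z*y-1)*x - z, -(z*y-1); y*x - 1, -y] := by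
  ext i j
  fin_cases i <;> fin_cases j <;> simp [Mmat, Matrix.mul_fin_two] <;> ring

lemma mmat_four' {R : Type*} [CommRing R] (x y z w : R) :
    Mmat [x, y, z, w] = !![((w*z-1)*y - w)*x - (w*z-1), -((w*z-1)*y - w);
                           (z*y-1)*x - z, -(z*y-1)] := by
  ext i j
  fin_cases i <;> fin_cases j <;> simp [Mmat, Matrix.mul_fin_two] <;> ring

theorem monomial_half_N_four_dvd (N : ℕ) (hN : 4 ≤ N) (hNeven : 2 ∣ N) (h4 : 4 ∣ N) :
    IsLeast {n : ℕ | 0 < n ∧ IsSolution (List.replicate n ((N / 2 : ℕ) : ZMod N))} 4 ∧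
    IsSolution (List.replicate 4 ((N / 2 : ℕ) : ZMod N)) ∧
    ¬ Reducible (List.replicate 4 ((N / 2 : ℕ) : ZMod N)) := by
  haveI : NeZero N := ⟨by omega⟩
  set c : ZMod N := ((N / 2 : ℕ) : ZMod N) with hc
  have hdvd : ∀ k : ℕ, ((k : ℕ) : ZMod N) = 0 ↔ N ∣ k := fun k =>
    ZMod.natCast_eq_zero_iff k N
  have hc2 : c + c = 0 := by
    rw [hc, ← Nat.cast_add, show N / 2 + N / 2 = N by omega, ZMod.natCast_self]
  have hcc : c * c = 0 := by
    rw [hc, ← Nat.cast_mul, hdvd]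
    obtain ⟨m, rfl⟩ := h4
    have : 4 * m / 2 = 2 * m := by omega
    rw [this]
    exact ⟨m, by ring⟩
  have hc0 : c ≠ 0 := by
    rw [hc, Ne, hdvd]
    intro h
    have := Nat.le_of_dvd (by omega) h
    omega
  have h10 : (1 : ZMod N) ≠ 0 := by
    intro h
    have : ((1 : ℕ) : ZMod N) = 0 := by exact_mod_cast h
    rw [hdvd] at this
    have := Nat.le_of_dvd (by omega) this
    omega
  have h20 : (1 : ZMod N) + 1 ≠ 0 := by
    intro h
    have : ((2 : ℕ) : ZMod N) = 0 := by push_cast; linear_combination h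
    rw [hdvd] at this
    have := Nat.le_of_dvd (by omega) this
    omega
  -- main solution
  have hrep4 : List.replicate 4 c = [c, c, c, c] := by simp [List.replicate]
  have hsol4 : IsSolution (List.replicate 4 c) := by
    left
    rw [hrep4, mmat_four']
    ext i j
    fin_cases i <;> fin_cases j <;> simp [Matrix.one_apply] <;>
      first
        | linear_combination (c*c-3)*hcc
        | linear_combination (-c)*hcc + hc2
        | linear_combination c*hcc - hc2
        | linear_combination -hcc
        | linear_combination hcc
  refine ⟨⟨⟨by norm_num, hsol4⟩, ?_⟩, hsol4, ?_⟩
  · -- minimality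
    rintro n ⟨hn, hsol⟩
    by_contra hlt
    push_neg at hlt
    interval_cases n
    · rw [show List.replicate 1 c = [c] by simp, IsSolution, mmat_one'] at hsol
      rcases hsol with h | h
      · have := congrFun (congrFun h 1) 0
        simp [Matrix.one_apply] at this
        exact h10 this
      · have := congrFun (congrFun h 1) 0
        simp [Matrix.one_apply] at this
        exact h10 (by first | linear_combination this | linear_combination -this)
    · rw [show List.replicate 2 c = [c, c] by simp [List.replicate], IsSolution, mmat_two'] at hsol
      rcases hsol with h | h
      · have := congrFun (congrFun h 0) 0
        simp [Matrix.one_apply] at this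
        exact h20 (by linear_combination -this + hcc)
      · have := congrFun (congrFun h 1) 0
        simp [Matrix.one_apply] at this
        exact hc0 this
    · rw [show List.replicate 3 c = [c, c, c] by simp [List.replicate], IsSolution, mmat_three'] at hsol
      rcases hsol with h | h
      · have := congrFun (congrFun h 0) 1
        simp [Matrix.one_apply] at this
        exact h10 (by first | linear_combination this + hcc | linear_combination -this - hcc)
      · have := congrFun (congrFun h 0) 1
        simp [Matrix.one_apply] at this
        exact h10 (by linear_combination this + hcc)
  · -- irreducibility
    rintro ⟨a, b, ha3, hb3, hbsol, hequiv⟩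
    have hlen : (oplus a b).length = a.length + b.length - 2 := by simp [oplus]
    have hob : oplus a b = List.replicate 4 c := by
      rcases hequiv with ⟨k, hk⟩ | ⟨k, hk⟩
      · rw [hk, List.rotate_replicate]
      · rw [hk, List.reverse_replicate, List.rotate_replicate]
    have hlen4 : a.length + b.length - 2 = 4 := by
      rw [← hlen, hob]; simp
    have hla : a.length = 3 := by omega
    have hlb : b.length = 3 := by omega
    obtain ⟨a0, a1, a2, rfl⟩ := List.length_eq_three.mp hla
    obtain ⟨b0, b1, b2, rfl⟩ := List.length_eq_three.mp hlb
    have hop : oplus [a0,a1,a2] [b0,b1,b2] = [a0+b2, a1, a2+b0, b1] := by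
      simp [oplus, List.ofFn_succ]
    rw [hop, hrep4] at hob
    simp only [List.cons.injEq, and_true] at hob
    obtain ⟨-, -, -, hb1⟩ := hob
    rw [IsSolution, mmat_three'] at hbsol
    have hb1v : b1 = 1 ∨ b1 = -1 := by
      rcases hbsol with h | h
      · right
        have h11 := congrFun (congrFun h 1) 1
        simp [Matrix.one_apply] at h11
        first | linear_combination h11 | linear_combination -h11
      · left
        have h11 := congrFun (congrFun h 1) 1
        simp [Matrix.one_apply] at h11
        first | linear_combination h11 | linear_combination -h11
    rcases hb1v with h | h
    · exact h10 (by linear_combination hcc + (1+c)*hb1 - (1+c)*h)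
    · exact h10 (by linear_combination hcc + (c-1)*hb1 - (c-1)*h)
end

section
/- Let N be an even integer with N ≥ 4 and 4 ∤ N. Then the least positive integer n such that the constant n-tuple (N/2 mod N, …, N/2 mod N) of elements of ℤ/Nℤ satisfies M_n(N/2, …, N/2) = Id or M_n(N/2, …, N/2) = −Id is n = 6; moreover the 6-tuple (N/2, N/2, N/2, N/2, N/2, N/2) is an irreducible solution of (E_N). -/
open Matrix

lemma sol_entries {R : Type*} [CommRing R] {M : Matrix (Fin 2) (Fin 2) R}
    (h : M = 1 ∨ M = -1) : M 1 0 = 0 ∧ M 1 1 * M 1 1 = 1 := by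
  rcases h with rfl | rfl <;> constructor <;> simp [Matrix.one_apply]

section main
variable {R : Type*} [CommRing R] {a : R}

lemma mm2 (haa : a * a = a) (h2a : a + a = 0) :
    Mmat [a, a] = !![a - 1, a; a, -1] := by
  ext i j
  fin_cases i <;> fin_cases j <;>
    simp [Mmat, Matrix.mul_apply, Fin.sum_univ_two] <;>
    first
    | ring1
    | linear_combination haa
    | linear_combination -haa
    | linear_combination h2a
    | linear_combination -h2a

lemma mm3 (haa : a * a = a) (h2a : a + a = 0) :
    Mmat [a, a, a] = !![a, 1 - a; a - 1, a] := by
  have h : Mmat [a, a, a] = Mmat [a, a] * !![a, -1; 1, 0] := rfl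
  rw [h, mm2 haa h2a]
  ext i j
  fin_cases i <;> fin_cases j <;>
    simp [Matrix.mul_apply, Fin.sum_univ_two] <;>
    first
    | ring1
    | linear_combination haa
    | linear_combination -haa
    | linear_combination h2a
    | linear_combination -h2a

lemma mm4 (haa : a * a = a) (h2a : a + a = 0) :
    Mmat [a, a, a, a] = !![1, a; a, 1 - a] := by
  have h : Mmat [a, a, a, a] = Mmat [a, a, a] * !![a, -1; 1, 0] := rfl
  rw [h, mm3 haa h2a]
  ext i j
  fin_cases i <;> fin_cases j <;>
    simp [Matrix.mul_apply, Fin.sum_univ_two] <;>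
    first
    | ring1
    | linear_combination haa
    | linear_combination -haa
    | linear_combination h2a
    | linear_combination -h2a

lemma mm5 (haa : a * a = a) (h2a : a + a = 0) :
    Mmat [a, a, a, a, a] = !![0, -1; 1, a] := by
  have h : Mmat [a, a, a, a, a] = Mmat [a, a, a, a] * !![a, -1; 1, 0] := rfl
  rw [h, mm4 haa h2a]
  ext i j
  fin_cases i <;> fin_cases j <;>
    simp [Matrix.mul_apply, Fin.sum_univ_two] <;>
    first
    | ring1
    | linear_combination haa
    | linear_combination -haa
    | linear_combination h2a
    | linear_combination -h2a

lemma mm6 (haa : a * a = a) (h2a : a + a = 0) :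
    Mmat [a, a, a, a, a, a] = -1 := by
  have h : Mmat [a, a, a, a, a, a] = Mmat [a, a, a, a, a] * !![a, -1; 1, 0] := rfl
  rw [h, mm5 haa h2a]
  ext i j
  fin_cases i <;> fin_cases j <;>
    simp [Matrix.mul_apply, Fin.sum_univ_two, Matrix.one_apply] <;>
    first
    | ring1
    | linear_combination haa
    | linear_combination -haa
    | linear_combination h2a
    | linear_combination -h2a

end main

theorem monomial_half_N_four_not_dvd (N : ℕ) (hN : 4 ≤ N) (hNeven : 2 ∣ N) (h4 : ¬ 4 ∣ N) :
    IsLeast {n : ℕ | 0 < n ∧ IsSolution (List.replicate n ((N / 2 : ℕ) : ZMod N))} 6 ∧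
    IsSolution (List.replicate 6 ((N / 2 : ℕ) : ZMod N)) ∧
    ¬ Reducible (List.replicate 6 ((N / 2 : ℕ) : ZMod N)) := by
  obtain ⟨m, rfl⟩ := hNeven
  have hm3 : 3 ≤ m := by omega
  have hdiv : 2 * m / 2 = m := by omega
  rw [hdiv]
  set a : ZMod (2 * m) := ((m : ℕ) : ZMod (2 * m)) with ha
  have h2a : a + a = 0 := by
    have h : ((m + m : ℕ) : ZMod (2 * m)) = 0 := by
      rw [ZMod.natCast_eq_zero_iff]; exact ⟨1, by ring⟩
    push_cast at h
    exact h
  have haa : a * a = a := by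
    obtain ⟨t, ht⟩ : ∃ t, m = 2 * t + 1 := ⟨m / 2, by omega⟩
    have h : a = ((2 * t + 1 : ℕ) : ZMod (2 * m)) := by rw [ha, ht]
    nth_rewrite 2 [h]
    push_cast
    linear_combination (t : ZMod (2 * m)) * h2a
  have ha0 : a ≠ 0 := by
    rw [ha]
    intro h
    rw [ZMod.natCast_eq_zero_iff] at h
    have := Nat.le_of_dvd (by omega) h
    omega
  have ha1 : a ≠ 1 := by
    intro h
    have h' : ((m : ℕ) : ZMod (2 * m)) = ((1 : ℕ) : ZMod (2 * m)) := by
      rw [← ha, h]; simp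
    rw [ZMod.natCast_eq_natCast_iff] at h'
    have h'' := (Nat.modEq_iff_dvd' (by omega)).mp h'.symm
    have := Nat.le_of_dvd (by omega) h''
    omega
  have hone : (1 : ZMod (2 * m)) ≠ 0 := by
    intro h
    have h' : ((1 : ℕ) : ZMod (2 * m)) = 0 := by push_cast; exact h
    rw [ZMod.natCast_eq_zero_iff] at h'
    have := Nat.le_of_dvd (by omega) h'
    omega
  have hrep6 : List.replicate 6 a = [a, a, a, a, a, a] := rfl
  have hsol6 : IsSolution (List.replicate 6 a) := by
    right
    rw [hrep6]
    exact mm6 haa h2a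
  refine ⟨⟨⟨by norm_num, hsol6⟩, ?_⟩, hsol6, ?_⟩
  · -- lower bound
    rintro n ⟨hn0, hnsol⟩
    by_contra hlt
    push_neg at hlt
    interval_cases n
    · -- n = 1
      have h := (sol_entries hnsol).1
      rw [show List.replicate 1 a = [a] from rfl] at h
      simp [Mmat, Matrix.mul_apply, Fin.sum_univ_two] at h
      exact hone h
    · -- n = 2
      have h := (sol_entries hnsol).1
      rw [show List.replicate 2 a = [a, a] from rfl, mm2 haa h2a] at h
      simp at h
      exact ha0 h
    · -- n = 3
      have h := (sol_entries hnsol).2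
      rw [show List.replicate 3 a = [a, a, a] from rfl, mm3 haa h2a] at h
      simp at h
      rw [haa] at h
      exact ha1 h
    · -- n = 4
      have h := (sol_entries hnsol).1
      rw [show List.replicate 4 a = [a, a, a, a] from rfl, mm4 haa h2a] at h
      simp at h
      exact ha0 h
    · -- n = 5
      have h := (sol_entries hnsol).2
      rw [show List.replicate 5 a = [a, a, a, a, a] from rfl, mm5 haa h2a] at h
      simp at h
      rw [haa] at h
      exact ha1 h
  · -- irreducibility
    rintro ⟨A, B, hA, hB, hBsol, heq⟩
    have hoe : oplus A B = List.replicate 6 a := by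
      rcases heq with ⟨k, hk⟩ | ⟨k, hk⟩
      · rw [List.rotate_replicate] at hk; exact hk
      · rw [List.reverse_replicate, List.rotate_replicate] at hk; exact hk
    have hlen : A.length + B.length = 8 := by
      have h := congrArg List.length hoe
      simp [oplus] at h
      omega
    have hent : ∀ i : ℕ, A.length ≤ i → i < 6 → B.getD (i - A.length + 1) 0 = a := by
      intro i h1 h2
      have h6 : (oplus A B).length = 6 := by simp [oplus]; omega
      have e1 := List.getElem_of_eq hoe (show i < (oplus A B).length by omega)
      rw [List.getElem_replicate] at e1
      simp only [oplus, List.getElem_ofFn] at e1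
      have c1 : ¬ (i = 0) := by omega
      have c2 : ¬ (i < A.length - 1) := by omega
      have c3 : ¬ (i = A.length - 1) := by omega
      rw [if_neg c1, if_neg c2, if_neg c3] at e1
      exact e1
    have hcase : B.length = 3 ∨ B.length = 4 ∨ B.length = 5 := by omega
    rcases hcase with h3 | h4' | h5
    · -- B has length 3, A has length 5
      obtain ⟨x, y, z, rfl⟩ := List.length_eq_three.mp h3
      have hA5 : A.length = 5 := by simp at hlen ⊢; omega
      have hy : y = a := by
        have h := hent 5 (by omega) (by omega)
        rw [hA5] at h
        simpa [List.getD] using h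
      subst hy
      have hsq := (sol_entries hBsol).2
      have h11 : Mmat [x, a, z] 1 1 = -a := by
        simp [Mmat, Matrix.mul_apply, Fin.sum_univ_two]
        try ring
      rw [h11] at hsq
      exact ha1 (by linear_combination hsq - haa)
    · -- B has length 4, A has length 4
      rcases B with _ | ⟨x, _ | ⟨y, _ | ⟨z, _ | ⟨w, _ | ⟨v, B⟩⟩⟩⟩⟩ <;> simp at h4'
      have hA4 : A.length = 4 := by simp at hlen ⊢; omega
      have hy : y = a := by
        have h := hent 4 (by omega) (by omega)
        rw [hA4] at h
        simpa [List.getD] using h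
      have hz : z = a := by
        have h := hent 5 (by omega) (by omega)
        rw [hA4] at h
        simpa [List.getD] using h
      subst hy; subst hz
      have hsq := (sol_entries hBsol).2
      have h11 : Mmat [x, a, a, w] 1 1 = 1 - a ^ 2 := by
        simp [Mmat, Matrix.mul_apply, Fin.sum_univ_two]
        try ring
      rw [h11] at hsq
      exact ha0 (by linear_combination (a ^ 2 + a - 1) * haa - hsq)
    · -- B has length 5, A has length 3
      rcases B with _ | ⟨x, _ | ⟨y, _ | ⟨z, _ | ⟨u, _ | ⟨w, _ | ⟨v, B⟩⟩⟩⟩⟩⟩ <;> simp at h5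
      have hA3 : A.length = 3 := by simp at hlen ⊢; omega
      have hy : y = a := by
        have h := hent 3 (by omega) (by omega)
        rw [hA3] at h
        simpa [List.getD] using h
      have hz : z = a := by
        have h := hent 4 (by omega) (by omega)
        rw [hA3] at h
        simpa [List.getD] using h
      have hu : u = a := by
        have h := hent 5 (by omega) (by omega)
        rw [hA3] at h
        simpa [List.getD] using h
      subst hy; subst hz; subst hu
      have hsq := (sol_entries hBsol).2
      have h11 : Mmat [x, a, a, a, w] 1 1 = 2 * a - a ^ 3 := by
        simp [Mmat, Matrix.mul_apply, Fin.sum_univ_two]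
        try ring
      rw [h11] at hsq
      exact ha1 (by linear_combination hsq - (a ^ 4 + a ^ 3 - 3 * a ^ 2 - 3 * a + 1) * haa)
end

section
/- Let N be a prime number with N ≥ 5 and let k ∈ ℤ/Nℤ with k ≠ 0. Assume that k² + 8 is not a square in ℤ/Nℤ. Let n be the least even positive integer such that the alternating n-tuple (k, −k, k, −k, …, k, −k) is a solution of (E_N). Then this alternating n-tuple (k, −k, …, k, −k) is an irreducible solution of (E_N). -/
open Matrix

section Aux

variable {R : Type*} [CommRing R]

/-- The Chebyshev-like sequence `u₀ = 0`, `u₁ = 1`, `u_{m+2} = t·u_{m+1} - u_m`. -/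
def useq (t : R) : ℕ → R
  | 0 => 0
  | 1 => 1
  | (m+2) => t * useq t (m+1) - useq t m

lemma useq_add_two (t : R) (m : ℕ) :
    useq t (m+2) = t * useq t (m+1) - useq t m := rfl

lemma useq_catalan (t : R) (m : ℕ) :
    useq t (m+2) * useq t m - useq t (m+1)^2 = -1 := by
  induction m with
  | zero => simp [useq]
  | succ p ih =>
      rw [useq_add_two]
      linear_combination ih - useq t (p+2) * (useq_add_two t p)

lemma altList_length (n : ℕ) (k : R) : (altList n k).length = n := by
  simp [altList]

lemma altList_getElem (n : ℕ) (k : R) (i : ℕ) (h : i < (altList n k).length) :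
    (altList n k)[i] = if i % 2 = 0 then k else -k := by
  simp [altList]

lemma altList_cons (n : ℕ) (k : R) : altList (n+1) k = k :: altList n (-k) := by
  unfold altList
  rw [List.ofFn_succ]
  simp only [Fin.val_zero, Fin.val_succ]
  norm_num
  funext i
  by_cases hi : (i : ℕ) % 2 = 0
  · have h1 : ((i : ℕ) + 1) % 2 = 1 := by omega
    simp [hi, h1]
  · have h1 : ((i : ℕ) + 1) % 2 = 0 := by omega
    simp [hi, h1]

lemma Mmat_nil : Mmat ([] : List R) = 1 := rfl

lemma Mmat_cons (x : R) (t : List R) : Mmat (x :: t) = Mmat t * !![x,-1;1,0] := rfl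

lemma Mmat_append (s u : List R) : Mmat (s ++ u) = Mmat u * Mmat s := by
  induction s with
  | nil => simp [Mmat]
  | cons x s ih => rw [List.cons_append, Mmat_cons, Mmat_cons, ih, mul_assoc]

lemma Mmat_altList_even (k t : R) (ht : t = -(k^2+2)) (m : ℕ) :
    Mmat (altList (2*m) k) =
      !![useq t m + useq t (m+1), k * useq t m;
         k * useq t m, (k^2+1) * useq t m + useq t (m+1)] := by
  induction m with
  | zero =>
      show Mmat (altList 0 k) = _
      have : altList 0 k = [] := by simp [altList]
      rw [this, Mmat_nil]
      simp [useq]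
      exact Matrix.one_fin_two
  | succ p ih =>
      have h2 : 2*(p+1) = (2*p) + 1 + 1 := by ring
      rw [h2, altList_cons, altList_cons, neg_neg, Mmat_cons, Mmat_cons, ih,
        useq_add_two, ht]
      ext i j
      fin_cases i <;> fin_cases j <;>
        simp [Matrix.mul_apply, Fin.sum_univ_two] <;> ring

lemma Mmat_altList_odd (k t : R) (ht : t = -(k^2+2)) (m : ℕ) :
    Mmat (altList (2*m+1) k) =
      !![k * useq t (m+1), -(useq t m + useq t (m+1));
         useq t m + useq t (m+1), k * useq t m] := by
  rw [altList_cons, Mmat_cons, Mmat_altList_even (-k) t (by rw [ht]; ring)]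
  ext i j
  fin_cases i <;> fin_cases j <;>
    simp [Matrix.mul_apply, Fin.sum_univ_two] <;> ring

lemma altList_reverse (n : ℕ) (hn : Even n) (k : R) :
    (altList n k).reverse = altList n (-k) := by
  obtain ⟨r, rfl⟩ := hn
  apply List.ext_getElem (by simp [altList])
  intro i h1 h2
  rw [List.getElem_reverse, altList_getElem, altList_getElem]
  have hi : i < r + r := by simpa [altList_length] using h2
  rw [altList_length]
  by_cases hp : i % 2 = 0
  · have h3 : (r + r - 1 - i) % 2 = 1 := by omega
    simp [hp, h3]
  · have h3 : (r + r - 1 - i) % 2 = 0 := by omega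
    simp [hp, h3]

lemma altList_rotate (n : ℕ) (hn : Even n) (k : R) (s : ℕ) :
    ∃ k', (k' = k ∨ k' = -k) ∧ (altList n k).rotate s = altList n k' := by
  refine ⟨if s % 2 = 0 then k else -k, by split <;> simp, ?_⟩
  apply List.ext_getElem (by simp [altList])
  intro i h1 h2
  rw [List.getElem_rotate, altList_getElem, altList_getElem]
  have hd : 2 ∣ n := hn.two_dvd
  rw [altList_length]
  have hmm : (i + s) % n % 2 = (i + s) % 2 := Nat.mod_mod_of_dvd _ hd
  rw [hmm]
  by_cases hp : i % 2 = 0 <;> by_cases hq : s % 2 = 0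
  · have h3 : (i + s) % 2 = 0 := by omega
    simp [hp, hq, h3]
  · have h3 : (i + s) % 2 = 1 := by omega
    simp [hp, hq, h3]
  · have h3 : (i + s) % 2 = 1 := by omega
    simp [hp, hq, h3]
  · have h3 : (i + s) % 2 = 0 := by omega
    simp [hp, hq, h3]

lemma oplus_length (a b : List R) : (oplus a b).length = a.length + b.length - 2 := by
  simp [oplus]

lemma reducible_extract {k'' : R} {a b : List R}
    (ha : 3 ≤ a.length) (hb : 3 ≤ b.length) (hsol : IsSolution b)
    (heq : oplus a b = altList (a.length + b.length - 2) k'') :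
    ∃ (k₃ : R) (j : ℕ), (k₃ = k'' ∨ k₃ = -k'') ∧ 1 ≤ j ∧
      j + 3 ≤ a.length + b.length - 2 ∧ ((Mmat (altList j k₃)) 0 0)^2 = 1 := by
  -- entries of b in the interior
  have hbent : ∀ i : ℕ, ∀ hlt : i + 1 < b.length - 1,
      b[i+1]'(by omega) = (if (a.length + i) % 2 = 0 then k'' else -k'') := by
    intro i hlt
    have hw : a.length + i < (oplus a b).length := by rw [oplus_length]; omega
    have h1 : (oplus a b)[a.length + i]'hw = b.getD (a.length + i - a.length + 1) 0 := by
      simp only [oplus, List.getElem_ofFn]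
      rw [if_neg (by omega), if_neg (by omega), if_neg (by omega)]
    have h2 : a.length + i - a.length + 1 = i + 1 := by omega
    rw [h2] at h1
    have h3 : b.getD (i+1) 0 = b[i+1]'(by omega) := List.getD_eq_getElem b 0 (by omega)
    have h4 : (oplus a b)[a.length + i]'hw
        = (altList (a.length + b.length - 2) k'')[a.length + i]'(by
            rw [altList_length]; omega) :=
      List.getElem_of_eq heq hw
    rw [altList_getElem] at h4
    rw [← h3, ← h1, h4]
  -- decompose b
  obtain ⟨x, t, rfl⟩ := List.exists_cons_of_ne_nil
    (show b ≠ [] by intro h; simp [h] at hb)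
  have htne : t ≠ [] := by
    intro h; simp [h] at hb
  have hmlen : t.dropLast.length = (x :: t).length - 2 := by
    rw [List.length_dropLast]; simp
  have hbdec : x :: t = x :: (t.dropLast ++ [t.getLast htne]) := by
    rw [List.dropLast_append_getLast htne]
  have hmid_alt : t.dropLast
      = altList ((x :: t).length - 2) (if a.length % 2 = 0 then k'' else -k'') := by
    apply List.ext_getElem (by rw [altList_length, hmlen])
    intro i h1 h2
    have hi : i < (x :: t).length - 2 := by rwa [hmlen] at h1
    have e1 : t.dropLast[i]'h1 = t[i]'(by rw [List.length_dropLast] at h1; omega) :=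
      List.getElem_dropLast h1
    have e2 : t[i]'(by rw [List.length_dropLast] at h1; omega)
        = (x :: t)[i+1]'(by simp at hi ⊢; omega) := by simp
    have e3 := hbent i (by simp at hi ⊢; omega)
    rw [altList_getElem, e1, e2, e3]
    by_cases hp : i % 2 = 0 <;> by_cases hq : a.length % 2 = 0
    · have h3 : (a.length + i) % 2 = 0 := by omega
      simp [hp, hq, h3]
    · have h3 : (a.length + i) % 2 = 1 := by omega
      simp [hp, hq, h3]
    · have h3 : (a.length + i) % 2 = 1 := by omega
      simp [hp, hq, h3]
    · have h3 : (a.length + i) % 2 = 0 := by omega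
      simp [hp, hq, h3]
  -- the matrix computation
  set y := t.getLast htne with hy
  have hMb : Mmat (x :: t) = !![y,-1;1,0] * Mmat t.dropLast * !![x,-1;1,0] := by
    rw [hbdec, Mmat_cons, Mmat_append, Mmat_cons, Mmat_nil, one_mul]
  have hNyMy : !![(0:R),1;-1,y] * !![y,-1;1,0] = 1 := by
    ext i j; fin_cases i <;> fin_cases j <;>
      simp [Matrix.mul_apply, Fin.sum_univ_two, Matrix.one_apply]
  have hMxNx : !![x,-1;1,0] * !![(0:R),1;-1,x] = 1 := by
    ext i j; fin_cases i <;> fin_cases j <;>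
      simp [Matrix.mul_apply, Fin.sum_univ_two, Matrix.one_apply]
  have key : Mmat t.dropLast = !![(0:R),1;-1,y] * Mmat (x :: t) * !![(0:R),1;-1,x] := by
    rw [hMb]
    simp only [← mul_assoc]
    rw [hNyMy, one_mul, mul_assoc, hMxNx, mul_one]
  refine ⟨if a.length % 2 = 0 then k'' else -k'', (x :: t).length - 2,
    by split <;> simp, by simp at hb ⊢; omega, by simp at hb ⊢; omega, ?_⟩
  rw [← hmid_alt]
  rcases hsol with h | h <;> rw [key, h]
  · simp [Matrix.mul_apply, Fin.sum_univ_two]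
  · simp [Matrix.mul_apply, Fin.sum_univ_two]

end Aux

theorem dynomial_minimal_irreducible (N : ℕ) (hp : N.Prime) (hN : 5 ≤ N)
    (k : ZMod N) (hk : k ≠ 0)
    (hsq : ¬ ∃ y : ZMod N, y ^ 2 = k ^ 2 + 8)
    (n : ℕ) (hn : IsLeast {m : ℕ | 0 < m ∧ Even m ∧ IsSolution (altList m k)} n) :
    IsSolution (altList n k) ∧ ¬ Reducible (altList n k) := by
  haveI : Fact N.Prime := ⟨hp⟩
  obtain ⟨⟨hnpos, hneven, hnsol⟩, hmin⟩ := hn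
  refine ⟨hnsol, ?_⟩
  rintro ⟨a, b, ha3, hb3, hbsol, hequiv⟩
  obtain ⟨r, hr⟩ := hneven
  -- oplus a b is an alternating list
  obtain ⟨k'', hk''or, hoeq⟩ : ∃ k'' : ZMod N, (k'' = k ∨ k'' = -k) ∧
      oplus a b = altList n k'' := by
    rcases hequiv with ⟨s, hs⟩ | ⟨s, hs⟩
    · obtain ⟨k', h1, h2⟩ := altList_rotate n ⟨r, hr⟩ k s
      exact ⟨k', h1, by rw [hs, h2]⟩
    · rw [altList_reverse n ⟨r, hr⟩ k] at hs
      obtain ⟨k', h1, h2⟩ := altList_rotate n ⟨r, hr⟩ (-k) s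
      refine ⟨k', ?_, by rw [hs, h2]⟩
      rcases h1 with h | h
      · right; exact h
      · left; rw [h, neg_neg]
  have hn_eq : n = a.length + b.length - 2 := by
    have h := oplus_length a b
    rw [hoeq, altList_length] at h
    omega
  obtain ⟨k₃, j, hk₃or, hj1, hj3, hP⟩ :=
    reducible_extract ha3 hb3 hbsol (by rwa [hn_eq] at hoeq)
  rw [← hn_eq] at hj3
  have hk32 : k₃^2 = k^2 := by
    rcases hk₃or with h | h <;> rcases hk''or with h' | h' <;> rw [h, h'] <;> ring
  -- minimality facts for the sequence u
  have hur : useq (-(k^2+2)) r = 0 := by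
    have hnsol' : IsSolution (altList (2*r) k) := by
      rwa [show n = 2*r by omega] at hnsol
    have hent : k * useq (-(k^2+2)) r = 0 := by
      rcases hnsol' with h | h <;>
        rw [Mmat_altList_even k (-(k^2+2)) rfl r] at h <;>
        have h01 := congrFun (congrFun h 0) 1 <;>
        simpa [Matrix.one_apply] using h01
    rcases mul_eq_zero.mp hent with h' | h'
    · exact absurd h' hk
    · exact h'
  have hne : ∀ q : ℕ, 0 < q → q < r → useq (-(k^2+2)) q ≠ 0 := by
    intro q hq0 hqr hquz
    obtain ⟨p, rfl⟩ : ∃ p, q = p + 1 := ⟨q - 1, by omega⟩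
    have hcat := useq_catalan (-(k^2+2)) p
    have hrec := useq_add_two (-(k^2+2)) p
    rw [hquz] at hcat hrec
    have husq : useq (-(k^2+2)) (p+2) ^ 2 = 1 := by
      linear_combination useq (-(k^2+2)) (p+2) * hrec - hcat
    have hfac : (useq (-(k^2+2)) (p+2) - 1) * (useq (-(k^2+2)) (p+2) + 1) = 0 := by
      linear_combination husq
    have hsol2 : IsSolution (altList (2*(p+1)) k) := by
      rcases mul_eq_zero.mp hfac with h2 | h2
      · left
        rw [Mmat_altList_even k (-(k^2+2)) rfl (p+1), hquz,
          show useq (-(k^2+2)) (p+1+1) = 1 by linear_combination h2]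
        ext i j
        fin_cases i <;> fin_cases j <;> simp [Matrix.one_apply]
      · right
        rw [Mmat_altList_even k (-(k^2+2)) rfl (p+1), hquz,
          show useq (-(k^2+2)) (p+1+1) = -1 by linear_combination h2]
        ext i j
        fin_cases i <;> fin_cases j <;> simp [Matrix.one_apply]
    have := hmin ⟨by omega, ⟨p+1, by ring⟩, hsol2⟩
    omega
  -- case analysis on the parity of j
  rcases Nat.even_or_odd j with ⟨p, hpj⟩ | ⟨p, hpj⟩
  · -- even case: contradiction with minimality
    obtain ⟨q, rfl⟩ : ∃ q, p = q + 1 := ⟨p - 1, by omega⟩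
    rw [hpj, show (q+1) + (q+1) = 2*(q+1) by ring,
      Mmat_altList_even k₃ (-(k^2+2)) (by rw [hk32]) (q+1)] at hP
    have hP' : (useq (-(k^2+2)) (q+1) + useq (-(k^2+2)) (q+2))^2 = 1 := by
      simpa using hP
    have hcat := useq_catalan (-(k^2+2)) q
    have hrec := useq_add_two (-(k^2+2)) q
    have hzero : (-(k^2) : ZMod N) * (useq (-(k^2+2)) (q+1) * useq (-(k^2+2)) (q+2)) = 0 := by
      linear_combination hcat - useq (-(k^2+2)) (q+2) * hrec + hP'
    have hk2 : (-(k^2) : ZMod N) ≠ 0 := neg_ne_zero.mpr (pow_ne_zero 2 hk)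
    rcases mul_eq_zero.mp hzero with h | h
    · exact hk2 h
    · rcases mul_eq_zero.mp h with h' | h'
      · exact hne (q+1) (by omega) (by omega) h'
      · exact hne (q+2) (by omega) (by omega) h'
  · -- odd case: contradiction with k²+8 not a square
    rw [hpj, Mmat_altList_odd k₃ (-(k^2+2)) (by rw [hk32]) p] at hP
    have hP' : (k₃ * useq (-(k^2+2)) (p+1))^2 = 1 := by
      simpa using hP
    have hk2c : k^2 * (useq (-(k^2+2)) (p+1))^2 = 1 := by
      linear_combination hP' - (useq (-(k^2+2)) (p+1))^2 * hk32
    apply hsq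
    refine ⟨2 * useq (-(k^2+2)) p - (-(k^2+2)) * useq (-(k^2+2)) (p+1), ?_⟩
    have hcat := useq_catalan (-(k^2+2)) p
    have hrec := useq_add_two (-(k^2+2)) p
    linear_combination (-4 : ZMod N) * hcat + (4 * useq (-(k^2+2)) p) * hrec
      + (k^2+4) * hk2c
end

section
/- Let N be a prime number with N ≥ 2 and let k ∈ ℤ/Nℤ with k = 2 or k = −2. Then the least positive integer n such that the constant n-tuple (k, …, k) satisfies M_n(k, …, k) = Id or = −Id is n = N. -/
open Matrix

lemma mmat_replicate {R : Type*} [CommRing R] (k : R) (n : ℕ) :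
    Mmat (List.replicate n k) = (!![k, -1; 1, 0]) ^ n := by
  induction n with
  | zero => simp [Mmat]
  | succ m ih => rw [List.replicate_succ]; simp [Mmat, ih, pow_succ]

lemma pow_two_mat {R : Type*} [CommRing R] (n : ℕ) :
    (!![(2:R), -1; 1, 0]) ^ n = !![1 + (n:R), -(n:R); (n:R), 1 - (n:R)] := by
  induction n with
  | zero => ext i j; fin_cases i <;> fin_cases j <;> simp
  | succ m ih =>
    rw [pow_succ, ih]
    ext i j; fin_cases i <;> fin_cases j <;>
      simp [Matrix.mul_apply, Fin.sum_univ_two] <;> ring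

lemma pow_neg_two_mat {R : Type*} [CommRing R] (n : ℕ) :
    (!![(-2:R), -1; 1, 0]) ^ n =
      !![(-1)^n * (1 + (n:R)), (-1)^n * (n:R);
         (-1)^n * (-(n:R)), (-1)^n * (1 - (n:R))] := by
  induction n with
  | zero => ext i j; fin_cases i <;> fin_cases j <;> simp
  | succ m ih =>
    rw [pow_succ, ih]
    ext i j; fin_cases i <;> fin_cases j <;>
      simp [Matrix.mul_apply, Fin.sum_univ_two, pow_succ] <;> ring

lemma replicate_solution_iff (N : ℕ) (hp : N.Prime) (k : ZMod N)
    (hk : k = 2 ∨ k = -2) (n : ℕ) :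
    IsSolution (List.replicate n k) ↔ (n : ZMod N) = 0 := by
  haveI := Fact.mk hp
  constructor
  · intro h
    rcases hk with rfl | rfl
    · rcases h with h | h <;>
      · rw [mmat_replicate, pow_two_mat] at h
        have h10 := congrFun (congrFun h 1) 0
        simpa [Matrix.one_apply] using h10
    · rcases h with h | h <;>
      · rw [mmat_replicate, pow_neg_two_mat] at h
        have h10 := congrFun (congrFun h 1) 0
        simpa [Matrix.one_apply] using h10
  · intro h
    rcases hk with rfl | rfl
    · left
      rw [mmat_replicate, pow_two_mat, h]
      ext i j; fin_cases i <;> fin_cases j <;> simp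
    · rw [IsSolution, mmat_replicate, pow_neg_two_mat, h]
      rcases Nat.even_or_odd n with he | ho
      · left
        rw [he.neg_one_pow]
        ext i j; fin_cases i <;> fin_cases j <;> simp
      · right
        rw [ho.neg_one_pow]
        ext i j; fin_cases i <;> fin_cases j <;> simp [Matrix.one_apply]

theorem monomial_minimal_size_of_eq_two (N : ℕ) (hp : N.Prime) (hN : 2 ≤ N)
    (k : ZMod N) (hk : k = 2 ∨ k = -2) :
    IsLeast {n : ℕ | 0 < n ∧ IsSolution (List.replicate n k)} N := by
  haveI : NeZero N := ⟨by omega⟩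
  constructor
  · exact ⟨by omega, (replicate_solution_iff N hp k hk N).mpr (by simp)⟩
  · rintro n ⟨hn0, hsol⟩
    have h := (replicate_solution_iff N hp k hk n).mp hsol
    exact Nat.le_of_dvd hn0 ((ZMod.natCast_eq_zero_iff n N).mp h)
end

section
/- Let N be a prime number and let k ∈ ℤ/Nℤ with k ≠ 2 and k ≠ −2. Let n be the least positive integer such that the constant n-tuple (k, …, k) satisfies M_n(k, …, k) = Id or = −Id. Then n divides (N−1)/2 or n divides (N+1)/2. -/
open Matrix

lemma Mmat_replicate {R : Type*} [CommRing R] (k : R) (m : ℕ) :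
    Mmat (List.replicate m k) = (!![k,-1;1,0]) ^ m := by
  induction m with
  | zero => rfl
  | succ m ih => rw [List.replicate_succ]; simp only [Mmat, ih, pow_succ]

lemma eigV {K : Type*} [Field K] (a l u : K) (h : l*u = 1) (h2 : l + u = a) (m : ℕ) :
    (!![a,-1;1,0]:Matrix (Fin 2) (Fin 2) K) ^ m * !![l,u;1,1] = !![l,u;1,1] * (!![l,0;0,u])^m := by
  induction m with
  | zero => simp
  | succ m ih =>
    rw [pow_succ', pow_succ', mul_assoc, ih, ← mul_assoc, ← mul_assoc]
    congr 1
    ext i j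
    fin_cases i <;> fin_cases j <;>
      simp [Matrix.mul_apply, Fin.sum_univ_two] <;>
      first
      | linear_combination h - l * h2
      | linear_combination h - u * h2

lemma diagpow {K : Type*} [Field K] (l u : K) (m : ℕ) :
    (!![l,0;0,u] : Matrix (Fin 2) (Fin 2) K)^m = !![l^m,0;0,u^m] := by
  induction m with
  | zero => simp [Matrix.one_fin_two]
  | succ m ih =>
    rw [pow_succ, ih]
    ext i j
    fin_cases i <;> fin_cases j <;> simp [Matrix.mul_apply, Fin.sum_univ_two, pow_succ]

theorem monomial_minimal_size_dvd (N : ℕ) (hp : N.Prime) (k : ZMod N)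
    (hk2 : k ≠ 2) (hk2' : k ≠ -2)
    (n : ℕ) (hn : IsLeast {m : ℕ | 0 < m ∧ IsSolution (List.replicate m k)} n) :
    n ∣ (N - 1) / 2 ∨ n ∣ (N + 1) / 2 := by
  rcases hp.eq_two_or_odd' with rfl | hodd
  · left; norm_num
  haveI := Fact.mk hp
  set K := AlgebraicClosure (ZMod N) with hK
  let f : ZMod N →+* K := algebraMap (ZMod N) K
  have hf : Function.Injective f := f.injective
  haveI : CharP K N := charP_of_injective_ringHom hf N
  -- a root of X² - kX + 1
  obtain ⟨l, hl⟩ : ∃ l : K, (Polynomial.X^2 - Polynomial.C (f k) * Polynomial.X + 1 : Polynomial K).eval l = 0 := by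
    have hdeg : (Polynomial.X^2 - Polynomial.C (f k) * Polynomial.X + 1 : Polynomial K).degree = 2 := by
      compute_degree!
    obtain ⟨l, hl⟩ := IsAlgClosed.exists_root
      (Polynomial.X^2 - Polynomial.C (f k) * Polynomial.X + 1 : Polynomial K) (by rw [hdeg]; norm_num)
    exact ⟨l, by simpa [Polynomial.IsRoot] using hl⟩
  have hl' : l^2 - f k * l + 1 = 0 := by simpa using hl
  set u : K := f k - l with hu
  have hlu : l * u = 1 := by rw [hu]; linear_combination -hl'
  have hsum : l + u = f k := by rw [hu]; ring
  have hlnu : l ≠ u := by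
    intro h
    have h1 : l + l = f k := by rw [← h] at hsum; exact hsum
    have h2 : l * l = 1 := by rw [← h] at hlu; exact hlu
    have h4 : f (k^2 - 4) = 0 := by
      rw [map_sub, map_pow, map_ofNat]
      linear_combination (-(l + l + f k)) * h1 + 4 * h2
    have h5 : (k - 2) * (k + 2) = 0 := by
      have := hf (h4.trans (map_zero f).symm)
      linear_combination this
    rcases mul_eq_zero.mp h5 with h6 | h6
    · exact hk2 (sub_eq_zero.mp h6)
    · exact hk2' (eq_neg_of_add_eq_zero_left h6)
  -- matrices
  set V : Matrix (Fin 2) (Fin 2) K := !![l,u;1,1] with hV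
  have hVdet : V.det = l - u := by rw [hV, Matrix.det_fin_two_of]; ring
  have hVunit : IsUnit V := by
    rw [Matrix.isUnit_iff_isUnit_det, hVdet]
    exact isUnit_iff_ne_zero.mpr (sub_ne_zero.mpr hlnu)
  let φ : Matrix (Fin 2) (Fin 2) (ZMod N) →+* Matrix (Fin 2) (Fin 2) K := f.mapMatrix
  have hφinj : Function.Injective φ := fun M M' h => by
    ext i j
    apply hf
    have h' := congrFun (congrFun h i) j
    simpa [φ, RingHom.mapMatrix_apply, Matrix.map_apply] using h' 
  have hφA : φ (!![k,-1;1,0]) = !![f k,-1;1,0] := by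
    ext i j
    fin_cases i <;> fin_cases j <;>
      simp [φ, RingHom.mapMatrix_apply, Matrix.map_apply, _root_.map_neg, _root_.map_one,
        _root_.map_zero]
  -- key equivalence
  have key : ∀ m : ℕ, IsSolution (List.replicate m k) ↔ (l ^ m = 1 ∨ l ^ m = -1) := by
    intro m
    have heig := eigV (f k) l u hlu hsum m
    rw [diagpow] at heig
    constructor
    · intro hs
      rcases hs with hs | hs <;> rw [Mmat_replicate] at hs
      · have hBm : (!![f k,-1;1,0] : Matrix (Fin 2) (Fin 2) K) ^ m = 1 := by
          rw [← hφA, ← map_pow, hs, _root_.map_one]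
        rw [hBm, one_mul] at heig
        have hD : (!![l^m,0;0,u^m] : Matrix (Fin 2) (Fin 2) K) = 1 :=
          hVunit.mul_left_cancel (heig.symm.trans (mul_one V).symm)
        left
        have := congrFun (congrFun hD 0) 0
        simpa using this
      · have hBm : (!![f k,-1;1,0] : Matrix (Fin 2) (Fin 2) K) ^ m = -1 := by
          rw [← hφA, ← map_pow, hs, _root_.map_neg, _root_.map_one]
        rw [hBm] at heig
        have hD : (!![l^m,0;0,u^m] : Matrix (Fin 2) (Fin 2) K) = -1 := by
          apply hVunit.mul_left_cancel
          rw [← heig, neg_one_mul, mul_neg_one]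
        right
        have := congrFun (congrFun hD 0) 0
        simpa using this
    · intro hs
      have hprod : l^m * u^m = 1 := by rw [← mul_pow, hlu, one_pow]
      rcases hs with hs | hs
      · have hum : u^m = 1 := by rw [hs, one_mul] at hprod; exact hprod
        have hD : (!![l^m,0;0,u^m] : Matrix (Fin 2) (Fin 2) K) = 1 := by
          rw [hs, hum, Matrix.one_fin_two]
        rw [hD, mul_one] at heig
        have hBm : φ (!![k,-1;1,0] ^ m) = φ 1 := by
          rw [map_pow, hφA, _root_.map_one]
          refine hVunit.mul_right_cancel ?_
          rw [heig, one_mul]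
        left
        rw [Mmat_replicate]
        exact hφinj hBm
      · have hum : u^m = -1 := by linear_combination u^m * hs - hprod
        have hD : (!![l^m,0;0,u^m] : Matrix (Fin 2) (Fin 2) K) = -1 := by
          rw [hs, hum]
          ext i j
          fin_cases i <;> fin_cases j <;> simp [Matrix.one_fin_two]
        rw [hD] at heig
        have hBm : φ (!![k,-1;1,0] ^ m) = φ (-1) := by
          rw [map_pow, hφA, _root_.map_neg, _root_.map_one]
          refine hVunit.mul_right_cancel ?_
          rw [heig, mul_neg_one, neg_one_mul]
        right
        rw [Mmat_replicate]
        exact hφinj hBm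
  -- order of l
  have hl0 : l ≠ 0 := left_ne_zero_of_mul_eq_one hlu
  -- Frobenius: l^N is a root
  have hfrob : (l^2 - f k * l + 1)^N = (l^N)^2 - f k * l^N + 1 := by
    have h2 : (frobenius K N) (l^2 - f k * l + 1) =
        (frobenius K N) (l^2) - (frobenius K N) (f k * l) + (frobenius K N) 1 := by
      rw [map_add, map_sub]
    simp only [frobenius_def] at h2
    have hkN : (f k)^N = f k := by rw [← map_pow, ZMod.pow_card]
    rw [h2, mul_pow, hkN, one_pow]
    ring
  have hroot : (l^N)^2 - f k * l^N + 1 = 0 := by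
    rw [← hfrob, hl', zero_pow hp.ne_zero]
  have hfac : (l^N - l) * (l^N - u) = 0 := by
    linear_combination hroot + hlu - l^N * hsum
  have hcase : l ^ (N - 1) = 1 ∨ l ^ (N + 1) = 1 := by
    rcases mul_eq_zero.mp hfac with h | h
    · left
      have hNl : l^N = l := sub_eq_zero.mp h
      have : l^(N-1) * l = 1 * l := by
        rw [one_mul, ← pow_succ, Nat.sub_add_cancel hp.one_lt.le]
        exact hNl
      exact mul_right_cancel₀ hl0 this
    · right
      have hNl : l^N = u := sub_eq_zero.mp h
      rw [pow_succ, hNl, mul_comm]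
      exact hlu
  set d := orderOf l with hd
  have hdsol : d ∣ N - 1 ∨ d ∣ N + 1 := by
    rcases hcase with h | h
    · exact Or.inl (orderOf_dvd_of_pow_eq_one h)
    · exact Or.inr (orderOf_dvd_of_pow_eq_one h)
  have hdpos : 0 < d := by
    rcases hdsol with h | h
    · exact Nat.pos_of_dvd_of_pos h (Nat.sub_pos_of_lt hp.one_lt)
    · exact Nat.pos_of_dvd_of_pos h (Nat.succ_pos N)
  -- n equals d / gcd d 2
  set g := Nat.gcd d 2 with hg
  have hgd : g ∣ d := Nat.gcd_dvd_left d 2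
  have hg2 : g ∣ 2 := Nat.gcd_dvd_right d 2
  have hgpos : 0 < g := Nat.gcd_pos_of_pos_left 2 hdpos
  set n₀ := d / g with hn₀
  have hn₀g : n₀ * g = d := Nat.div_mul_cancel hgd
  have hn₀pos : 0 < n₀ := Nat.div_pos (Nat.le_of_dvd hdpos hgd) hgpos
  have hdivall : ∀ m : ℕ, d ∣ 2 * m → n₀ ∣ m := by
    intro m hm
    have hcop : Nat.Coprime n₀ (2 / g) := Nat.coprime_div_gcd_div_gcd hgpos
    have h1 : n₀ * g ∣ ((2 / g) * m) * g := by
      rw [hn₀g]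
      have : ((2 / g) * m) * g = 2 * m := by
        rw [mul_comm ((2/g) * m) g, ← mul_assoc, Nat.mul_div_cancel' hg2]
      rw [this]
      exact hm
    have h2 : n₀ ∣ (2 / g) * m := (Nat.mul_dvd_mul_iff_right hgpos).mp h1
    exact hcop.dvd_of_dvd_mul_left h2
  have hd2n₀ : d ∣ 2 * n₀ := by
    refine ⟨2 / g, ?_⟩
    rw [← hn₀g]
    rw [mul_comm n₀ g, mul_assoc, mul_comm n₀ (2/g), ← mul_assoc, Nat.mul_div_cancel' hg2]
  -- n₀ is a solution size
  have hsoln₀ : IsSolution (List.replicate n₀ k) := by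
    rw [key]
    have : l ^ (2 * n₀) = 1 := orderOf_dvd_iff_pow_eq_one.mp hd2n₀
    rw [two_mul, pow_add] at this
    exact mul_self_eq_one_iff.mp this
  -- d ∣ 2n
  have hd2n : d ∣ 2 * n := by
    have := (key n).mp hn.1.2
    apply orderOf_dvd_of_pow_eq_one
    rcases this with h | h
    · rw [two_mul, pow_add, h, one_mul]
    · rw [two_mul, pow_add, h]; ring
  have hn₀n : n₀ ∣ n := hdivall n hd2n
  have hnn₀ : n = n₀ := le_antisymm (hn.2 ⟨hn₀pos, hsoln₀⟩) (Nat.le_of_dvd hn.1.1 hn₀n)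
  subst hnn₀
  rcases hdsol with h | h
  · left
    apply hdivall
    have heven : Even (N - 1) := Nat.Odd.sub_odd hodd odd_one
    have : 2 * ((N - 1) / 2) = N - 1 := by
      rcases heven with ⟨r, hr⟩; omega
    rw [this]
    exact h
  · right
    apply hdivall
    have heven : Even (N + 1) := Odd.add_one hodd
    have : 2 * ((N + 1) / 2) = N + 1 := by
      rcases heven with ⟨r, hr⟩; omega
    rw [this]
    exact h
end

section
/- Let n and l be positive integers with n ≥ 3 and l ≥ 2, and let j be an integer with 2 ≤ j ≤ n−1. Then l^{n−j} divides the binomial coefficient C(2·l^{n−2}, j). -/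
open Nat

lemma factorization_le_choose_add (p : ℕ) (hp : p.Prime) {m j : ℕ} (hj : 0 < j) (hjm : j ≤ m) :
    m.factorization p ≤ (m.choose j).factorization p + j.factorization p := by
  have hm : 0 < m := lt_of_lt_of_le hj hjm
  have hc : 0 < m.choose j := Nat.choose_pos hjm
  have h := Nat.Prime.emultiplicity_le_emultiplicity_choose_add hp m j
  have f1 : FiniteMultiplicity p m := Nat.finiteMultiplicity_iff.2 ⟨hp.ne_one, hm⟩
  have f2 : FiniteMultiplicity p (m.choose j) := Nat.finiteMultiplicity_iff.2 ⟨hp.ne_one, hc⟩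
  have f3 : FiniteMultiplicity p j := Nat.finiteMultiplicity_iff.2 ⟨hp.ne_one, hj⟩
  rw [f1.emultiplicity_eq_multiplicity, f2.emultiplicity_eq_multiplicity,
    f3.emultiplicity_eq_multiplicity,
    Nat.multiplicity_eq_factorization hp hm.ne',
    Nat.multiplicity_eq_factorization hp hc.ne',
    Nat.multiplicity_eq_factorization hp hj.ne'] at h
  exact_mod_cast h

theorem pow_dvd_choose_two_mul_pow (n l j : ℕ) (hn : 3 ≤ n) (hl : 2 ≤ l)
    (hj : 2 ≤ j) (hj' : j ≤ n - 1) :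
    l ^ (n - j) ∣ Nat.choose (2 * l ^ (n - 2)) j := by
  set m := 2 * l ^ (n - 2) with hm
  have hjm : j ≤ m := by
    calc j ≤ n - 1 := hj'
    _ ≤ 2 * 2 ^ (n - 2) := by
        have := Nat.lt_two_pow_self (n := n - 2)
        omega
    _ ≤ m := by
        have : 2 ^ (n - 2) ≤ l ^ (n - 2) := Nat.pow_le_pow_left hl _
        omega
  have hm0 : 0 < m := by positivity
  have hc : 0 < m.choose j := Nat.choose_pos hjm
  rw [← Nat.factorization_le_iff_dvd (by positivity) hc.ne']
  intro p
  rw [Nat.factorization_pow]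
  simp only [Finsupp.coe_smul, Pi.smul_apply, smul_eq_mul]
  set e := l.factorization p with he
  rcases Nat.eq_zero_or_pos e with h0 | he1
  · simp [h0]
  have hp : p.Prime := by
    by_contra hnp
    rw [he, Nat.factorization_eq_zero_of_not_prime _ hnp] at he1
    omega
  -- key bound from the choose identity
  have key := factorization_le_choose_add p hp (by omega : 0 < j) hjm
  have hmfact : m.factorization p = (2 : ℕ).factorization p + (n - 2) * e := by
    rw [hm, Nat.factorization_mul (by norm_num) (by positivity), Nat.factorization_pow]
    simp [he]
  -- bound on v_p(j)
  have hjp : p ^ (j.factorization p) ∣ j := Nat.ordProj_dvd j p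
  have hjle : p ^ (j.factorization p) ≤ j := Nat.le_of_dvd (by omega) hjp
  have hvj : j.factorization p ≤ (j - 2) * e + (2 : ℕ).factorization p := by
    rcases eq_or_ne p 2 with rfl | hp2
    · have h2 : (2 : ℕ).factorization 2 = 1 := Nat.Prime.factorization_self Nat.prime_two
      rw [h2]
      -- v_2 j ≤ j - 1
      have : j.factorization 2 ≤ j - 1 := by
        by_contra hcon
        have hjv : j ≤ j.factorization 2 := by omega
        have : 2 ^ j ≤ 2 ^ (j.factorization 2) := Nat.pow_le_pow_right (by norm_num) hjv
        have := Nat.lt_two_pow_self (n := j)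
        omega
      have : j - 2 ≤ (j - 2) * e := Nat.le_mul_of_pos_right _ he1
      omega
    · have hp3 : 3 ≤ p := by
        rcases hp.two_le.lt_or_eq with h | h
        · omega
        · omega
      have h2 : (2 : ℕ).factorization p = 0 := by
        apply Nat.factorization_eq_zero_of_not_dvd
        intro hdvd
        have := Nat.le_of_dvd (by norm_num) hdvd
        omega
      rw [h2, Nat.add_zero]
      -- v_p j ≤ j - 2
      have hvle : j.factorization p ≤ j - 2 := by
        by_contra hcon
        have hjv : j - 1 ≤ j.factorization p := by omega
        have h1 : 3 ^ (j - 1) ≤ p ^ (j - 1) := Nat.pow_le_pow_left hp3 _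
        have h2' : p ^ (j - 1) ≤ p ^ (j.factorization p) :=
          Nat.pow_le_pow_right (by omega) hjv
        have h3 : j < 3 ^ (j - 1) := by
          have h4 : j - 1 < 2 ^ (j - 1) := Nat.lt_two_pow_self
          have h5 : 2 ^ (j - 1) < 3 ^ (j - 1) := Nat.pow_lt_pow_left (by norm_num) (by omega)
          omega
        omega
      calc j.factorization p ≤ j - 2 := hvle
        _ ≤ (j - 2) * e := Nat.le_mul_of_pos_right _ he1
  -- combine
  rw [hmfact] at key
  have harith : (n - j) * e + ((j - 2) * e + (2 : ℕ).factorization p)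
      = (2 : ℕ).factorization p + (n - 2) * e := by
    have : (n - j) * e + (j - 2) * e = (n - 2) * e := by
      rw [← Nat.add_mul]
      congr 1
      omega
    omega
  omega
end

section
/- Let N = l^n with integers l > 2 and n ≥ 3. Then the tuple of size 2l^{n−1} − 4l^{n−2} + 2 over ℤ/Nℤ whose first and last entries equal 2l^{n−1} mod N and all of whose other entries equal l mod N is a solution of (E_N). -/
open Matrix

section AuxGeneric

lemma aux_pow_expand {S : Type*} [CommRing S] (y c x : S) (t : ℕ) :
    ∃ e : S, (y + x*c)^(t+2) = y^(t+2) + ((t+2 : ℕ) : S)*x*c*y^(t+1)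
      + (((t+2).choose 2 : ℕ) : S)*x^2*c^2*y^t + x^3*e := by
  induction t with
  | zero =>
    exact ⟨0, by push_cast [Nat.choose]; ring⟩
  | succ t ih =>
    obtain ⟨e, he⟩ := ih
    refine ⟨(((t+2).choose 2 : ℕ) : S)*c^3*y^t + e*y + x*e*c, ?_⟩
    have hc : ((t+3).choose 2) = (t+2).choose 2 + (t+2) := by
      simp [Nat.choose_succ_succ]; omega
    have h3 : (y + x*c)^(t+3) = (y + x*c)^(t+2) * (y + x*c) := by ring
    rw [h3, he, hc]
    push_cast
    ring

lemma aux_choose_two (l : ℕ) : 2 * l.choose 2 = l * (l - 1) := by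
  induction l with
  | zero => simp
  | succ l ih =>
    rw [Nat.choose_succ_succ]
    simp only [Nat.choose_one_right]
    cases l with
    | zero => simp
    | succ m => simp at ih ⊢; nlinarith [ih]

lemma aux_L1 {S : Type*} [CommRing S] (l : ℕ) (α : S) (h : α^2 = (l:S)*α - 1) (k : ℕ) :
    ∃ c : S, α^(2*k) = (-1:S)^k * (1 - ((k:S)*(l:S))*α) + (l:S)^2*c := by
  induction k with
  | zero => exact ⟨0, by simp⟩
  | succ k ih =>
    obtain ⟨c, hc⟩ := ih
    refine ⟨(-1:S)^(k+1)*(k:S)*α^2 + c*((l:S)*α - 1), ?_⟩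
    have h2 : 2*(k+1) = 2*k + 2 := by ring
    rw [h2, pow_add]
    push_cast
    linear_combination (α^2) * hc + ((-1:S)^k*(1-((k:S)*(l:S))*α) + (l:S)^2*c) * h

lemma aux_L2 {S : Type*} [CommRing S] (l : ℕ) (hl : 2 < l) (α : S)
    (h : α^2 = (l:S)*α - 1) (j : ℕ) :
    ∃ c : S, α^(2*(l-2)*l^j) = (-1:S)^l * (1 + 2*(l:S)^(j+1)*α) + (l:S)^(j+2)*c := by
  induction j with
  | zero =>
    obtain ⟨c, hc⟩ := aux_L1 l α h (l-2)
    refine ⟨c - (-1:S)^l * α, ?_⟩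
    have e1 : (-1:S)^(l-2) = (-1:S)^l := by
      conv_rhs => rw [show l = (l-2)+2 by omega]
      rw [pow_add]; simp
    have e2 : ((l-2 : ℕ) : S) = (l:S) - 2 := by
      push_cast [Nat.cast_sub (by omega : 2 ≤ l)]; ring
    rw [e1, e2] at hc
    simp only [pow_zero, pow_one, pow_succ]
    linear_combination hc
  | succ j ih =>
    obtain ⟨c, hc⟩ := ih
    set ε : S := (-1:S)^l with hε
    set b : S := 2*(l:S)^(j+1) with hb
    set x : S := (l:S)^(j+2) with hx
    have hεl : ε^l = ε := by
      rcases Nat.even_or_odd l with he | ho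
      · rw [hε, he.neg_one_pow]; simp
      · rw [hε, ho.neg_one_pow, ho.neg_one_pow]
    have hexp : 2*(l-2)*l^(j+1) = (2*(l-2)*l^j) * l := by rw [pow_succ]; ring
    obtain ⟨e₁, he₁⟩ := aux_pow_expand (ε*(1+b*α)) c x (l-2)
    obtain ⟨e₂, he₂⟩ := aux_pow_expand (1:S) α b (l-2)
    have hl2 : l - 2 + 2 = l := by omega
    rw [hl2] at he₁ he₂
    have h4c : ((l.choose 2 : ℕ) : S) * 4 = 2*(l:S)*((l:S)-1) := by
      have hct := aux_choose_two l
      have h4 : 4 * l.choose 2 = 2*(l*(l-1)) := by omega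
      calc ((l.choose 2 : ℕ) : S) * 4 = ((4 * l.choose 2 : ℕ) : S) := by push_cast; ring
        _ = ((2*(l*(l-1)) : ℕ) : S) := by rw [h4]
        _ = 2*(l:S)*((l:S)-1) := by push_cast [Nat.cast_sub (by omega : 1 ≤ l)]; ring
    refine ⟨c*(ε*(1+b*α))^(l-2+1)
        + ((l.choose 2 : ℕ):S)*(l:S)^(j+1)*c^2*(ε*(1+b*α))^(l-2)
        + (l:S)^(2*j+3)*e₁
        + ε*(2*((l:S)-1)*(l:S)^j*α^2 + 8*(l:S)^(2*j)*e₂), ?_⟩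
    have hYl : (ε*(1+b*α))^l = ε*(1 + (l:S)*b*α*1^(l-2+1)
        + ((l.choose 2 : ℕ):S)*b^2*α^2*1^(l-2) + b^3*e₂) := by
      rw [mul_pow, hεl, he₂]; simp
    rw [hexp, pow_mul, hc, he₁]
    linear_combination hYl + (ε*(l:S)^(2*j+2)*α^2) * h4c

lemma aux_L2' {S : Type*} [CommRing S] (l : ℕ) (hl : 2 < l) (α : S)
    (h : α^2 = (l:S)*α - 1) (j : ℕ) :
    ∃ c : S, α^(2*(l-2)*l^j)
      = (-1:S)^l * (1 + ((l:S)^(j+1) + (l:S)^(j+1))*α) + (l:S)^(j+2)*c := by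
  obtain ⟨c, hc⟩ := aux_L2 l hl α h j
  exact ⟨c, by linear_combination hc⟩

end AuxGeneric

open Matrix

section AuxMatrix

variable {R : Type*} [CommRing R]

lemma aux_natcast_fin_two (k : ℕ) :
    ((k : ℕ) : Matrix (Fin 2) (Fin 2) R) = !![(k:R), 0; 0, (k:R)] := by
  rw [← Matrix.diagonal_natCast]
  ext i j
  fin_cases i <;> fin_cases j <;> simp [Matrix.diagonal]

lemma aux_core (x y : R) (h1 : x*y = 0) (h2 : x*x = 0) :
    !![x,-1;1,0] * ((1 : Matrix (Fin 2) (Fin 2) R) + !![x,0;0,x] * !![y,-1;1,0])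
      * !![x,-1;1,0] = -1 := by
  ext i j
  fin_cases i <;> fin_cases j <;>
    simp [Matrix.mul_apply, Fin.sum_univ_two, Matrix.one_fin_two] <;>
    first
      | linear_combination x^2*h1 - h2
      | linear_combination (-x)*h1
      | linear_combination x*h1
      | linear_combination h1

end AuxMatrix


section AuxMatrix2
variable {R : Type*} [CommRing R]

lemma aux_A2 (u : R) : (!![u,-1;1,0] : Matrix (Fin 2) (Fin 2) R)^2
    = !![u,0;0,u] * !![u,-1;1,0] - 1 := by
  rw [pow_two]
  ext i j
  fin_cases i <;> fin_cases j <;>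
    simp [Matrix.mul_apply, Fin.sum_univ_two, Matrix.one_fin_two] <;> ring

lemma aux_zero : (!![(0:R),0;0,0] : Matrix (Fin 2) (Fin 2) R) = 0 := by
  ext i j
  fin_cases i <;> fin_cases j <;> simp

end AuxMatrix2

lemma aux_Mmat_append {R : Type*} [CommRing R] (s t : List R) :
    Mmat (s ++ t) = Mmat t * Mmat s := by
  induction s with
  | nil => simp [Mmat]
  | cons a s ih =>
    rw [List.cons_append]
    show Mmat (s ++ t) * _ = _
    rw [ih, mul_assoc]
    rfl

lemma aux_Mmat_replicate {R : Type*} [CommRing R] (m : ℕ) (x : R) :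
    Mmat (List.replicate m x) = (!![x,-1;1,0] : Matrix (Fin 2) (Fin 2) R)^m := by
  induction m with
  | zero => simp [Mmat]
  | succ m ih =>
    rw [List.replicate_succ]
    show Mmat _ * _ = _
    rw [ih, pow_succ]


theorem special_tuple_solution (l n : ℕ) (hl : 2 < l) (hn : 3 ≤ n) :
    IsSolution
      (((2 * l ^ (n - 1) : ℕ) : ZMod (l ^ n)) ::
        (List.replicate (2 * l ^ (n - 1) - 4 * l ^ (n - 2)) ((l : ℕ) : ZMod (l ^ n)) ++
          [((2 * l ^ (n - 1) : ℕ) : ZMod (l ^ n))])) := by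
  haveI : NeZero (l^n) := ⟨by positivity⟩
  set u : ZMod (l^n) := ((l:ℕ) : ZMod (l^n)) with hu
  set aa : ZMod (l^n) := ((2 * l ^ (n - 1) : ℕ) : ZMod (l^n)) with haa
  set A : Matrix (Fin 2) (Fin 2) (ZMod (l^n)) := !![u, -1; 1, 0] with hA
  set Ma : Matrix (Fin 2) (Fin 2) (ZMod (l^n)) := !![aa, -1; 1, 0] with hMa
  -- basic zero facts
  have hzero : ∀ k : ℕ, l^n ∣ k → ((k : ℕ) : ZMod (l^n)) = 0 := by
    intro k hk
    rwa [ZMod.natCast_eq_zero_iff]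
  have h1 : aa * u = 0 := by
    rw [haa, hu, ← Nat.cast_mul]
    apply hzero
    refine ⟨2, ?_⟩
    conv_rhs => rw [show n = (n-1)+1 by omega, pow_succ]
    ring
  have h2 : aa * aa = 0 := by
    rw [haa, ← Nat.cast_mul]
    apply hzero
    refine ⟨4 * l^(n-2), ?_⟩
    have hps : l^(n-1) * l^(n-1) = l^n * l^(n-2) := by
      rw [← pow_add, ← pow_add]
      congr 1
      omega
    calc 2*l^(n-1) * (2*l^(n-1)) = 4 * (l^(n-1) * l^(n-1)) := by ring
      _ = l ^ n * (4 * l^(n-2)) := by rw [hps]; ring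
  -- the matrix relation
  have hA2 : A^2 = ((l:ℕ) : Matrix (Fin 2) (Fin 2) (ZMod (l^n))) * A - 1 := by
    rw [hA, aux_natcast_fin_two]
    exact aux_A2 u
  -- commutative subring
  letI : CommRing (Algebra.adjoin (ZMod (l^n)) {A}) :=
    Algebra.adjoinCommRingOfComm _ (by rintro a rfl b rfl; rfl)
  set α : Algebra.adjoin (ZMod (l^n)) {A} :=
    ⟨A, Algebra.self_mem_adjoin_singleton _ A⟩ with hα'
  have hα : α^2 = (l : Algebra.adjoin (ZMod (l^n)) {A})*α - 1 := by
    apply Subtype.ext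
    push_cast
    exact hA2
  obtain ⟨c, hc⟩ := aux_L2' l hl α hα (n-2)
  have hc' := congrArg (Subtype.val) hc
  push_cast at hc'
  rw [show n-2+1 = n-1 by omega, show n-2+2 = n by omega] at hc'
  have hpow : ((l:ℕ) : Matrix (Fin 2) (Fin 2) (ZMod (l^n)))^n = 0 := by
    rw [← Nat.cast_pow, aux_natcast_fin_two, hzero _ dvd_rfl]
    exact aux_zero
  rw [hpow, zero_mul, add_zero] at hc'
  have hcast : ((l:ℕ) : Matrix (Fin 2) (Fin 2) (ZMod (l^n)))^(n-1)
        + ((l:ℕ) : Matrix (Fin 2) (Fin 2) (ZMod (l^n)))^(n-1)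
      = ((2 * l ^ (n - 1) : ℕ) : Matrix (Fin 2) (Fin 2) (ZMod (l^n))) := by
    have h2 : l^(n-1) + l^(n-1) = 2 * l^(n-1) := by ring
    rw [← Nat.cast_pow, ← Nat.cast_add, h2]
  rw [hcast] at hc'
  -- list structure
  have hm : 2*l^(n-1) - 4*l^(n-2) = 2*(l-2)*l^(n-2) := by
    apply Nat.sub_eq_of_eq_add
    obtain ⟨s, rfl⟩ : ∃ s, l = s + 3 := ⟨l - 3, by omega⟩
    have h3 : s + 3 - 2 = s + 1 := by omega
    rw [h3, show n - 1 = (n-2)+1 by omega, pow_succ]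
    ring
  have hlist : Mmat (aa :: (List.replicate (2 * l ^ (n - 1) - 4 * l ^ (n - 2)) u ++ [aa]))
      = Ma * (A ^ (2*(l-2)*l^(n-2))) * Ma := by
    show Mmat (List.replicate (2 * l ^ (n - 1) - 4 * l ^ (n - 2)) u ++ [aa]) * Ma = _
    rw [aux_Mmat_append, aux_Mmat_replicate, hm]
    show ((1 : Matrix (Fin 2) (Fin 2) (ZMod (l^n))) * Ma) * _ * _ = _
    rw [one_mul, ← hA]
  show Mmat _ = 1 ∨ Mmat _ = -1
  rw [hlist, hc']
  have hcore := aux_core aa u h1 h2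
  rw [← hMa] at hcore
  have hAform : (1 : Matrix (Fin 2) (Fin 2) (ZMod (l^n)))
        + ((2 * l ^ (n - 1) : ℕ) : Matrix (Fin 2) (Fin 2) (ZMod (l^n))) * A
      = (1 : Matrix (Fin 2) (Fin 2) (ZMod (l^n))) + !![aa,0;0,aa] * !![u,-1;1,0] := by
    rw [aux_natcast_fin_two, ← haa, hA]
  rcases Nat.even_or_odd l with he | ho
  · right
    rw [he.neg_one_pow, one_mul, hAform]
    exact hcore
  · left
    rw [ho.neg_one_pow, neg_one_mul, mul_neg, neg_mul, hAform, hcore, neg_neg]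
end
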